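/- Let α be a real number and (c_n)_{n≥1} a sequence of positive integers, with q_n, A_n the data of the generalized alternating-Sylvester expansion of α. Then the series Σ_{n=1}^∞ (−1)^{n−1} q_n converges and α = q_0 + Σ_{n=1}^∞ (−1)^{n−1} q_n. -/

import Mathlib

open Filter Topology

/-- The rational value `c/⌊c/x⌋` used at each step (0 if `x = 0`). -/
noncomputable def gasQaux (cn : ℕ) (x : ℝ) : ℝ :=
  if x = 0 then 0 else (cn : ℝ) / (⌊(cn : ℝ) / x⌋ : ℝ)

/-- `gasA c α n` is `A_n` of the generalized alternating-Sylvester expansion of `α`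
(for `n ≥ 1`; the value at `0` is a dummy). `A_1 = α - ⌊α⌋`, `A_{n+1} = q_n - A_n`. -/
noncomputable def gasA (c : ℕ → ℕ) (α : ℝ) : ℕ → ℝ
  | 0 => 0
  | 1 => α - ⌊α⌋
  | n + 2 => gasQaux (c (n + 1)) (gasA c α (n + 1)) - gasA c α (n + 1)

/-- `gasQ c α n` is `q_n`: `q_0 = ⌊α⌋`; for `n ≥ 1`, `q_n = c_n / a_n` if `A_n ≠ 0`, else `0`. -/
noncomputable def gasQ (c : ℕ → ℕ) (α : ℝ) : ℕ → ℝ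
  | 0 => (⌊α⌋ : ℤ)
  | n + 1 => gasQaux (c (n + 1)) (gasA c α (n + 1))

/-- `gasa c α n` is `a_n = ⌊c_n / A_n⌋` (meaningful when `A_n ≠ 0`). -/
noncomputable def gasa (c : ℕ → ℕ) (α : ℝ) (n : ℕ) : ℤ :=
  ⌊(c n : ℝ) / gasA c α n⌋

lemma gas_key (cn : ℕ) (hc : 0 < cn) (x : ℝ) (hx0 : 0 ≤ x) (hx1 : x < 1) :
    0 ≤ gasQaux cn x - x ∧ gasQaux cn x - x ≤ 1/2 ∧
      (x ≤ 1/2 → gasQaux cn x - x ≤ x/2) := by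
  rcases eq_or_lt_of_le hx0 with h0 | hxpos
  · simp [gasQaux, ← h0]
  · have hxne : x ≠ 0 := ne_of_gt hxpos
    have hC : (1:ℝ) ≤ (cn:ℝ) := by exact_mod_cast hc
    set a : ℤ := ⌊(cn:ℝ)/x⌋ with ha
    have hale : (a:ℝ) ≤ (cn:ℝ)/x := Int.floor_le _
    have halt : (cn:ℝ)/x < (a:ℝ) + 1 := Int.lt_floor_add_one _
    have haC : (cn:ℝ) ≤ (a:ℝ) := by
      have h : ((cn:ℤ):ℝ) ≤ (cn:ℝ)/x := by
        push_cast
        rw [le_div_iff₀ hxpos]; nlinarith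
      have := Int.le_floor.mpr h
      exact_mod_cast this
    have hapos : (0:ℝ) < (a:ℝ) := by linarith
    have h1 : (a:ℝ) * x ≤ (cn:ℝ) := by
      have := (le_div_iff₀ hxpos).mp hale
      linarith
    have h2 : (cn:ℝ) < ((a:ℝ) + 1) * x := (div_lt_iff₀ hxpos).mp halt
    have hq : gasQaux cn x = (cn:ℝ) / (a:ℝ) := by
      simp [gasQaux, hxne, ha]
    have hy0 : 0 ≤ gasQaux cn x - x := by
      rw [hq, sub_nonneg, le_div_iff₀ hapos]
      linarith
    refine ⟨hy0, ?_, ?_⟩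
    · rw [hq]
      have : (cn:ℝ) / (a:ℝ) ≤ x + 1/2 := by
        rw [div_le_iff₀ hapos]
        nlinarith [mul_lt_mul_of_pos_left h2 hapos, mul_le_mul haC haC (by linarith) (by linarith)]
      linarith
    · intro hxh
      have ha2 : (2:ℝ) ≤ (a:ℝ) := by
        have h : ((2:ℤ):ℝ) ≤ (cn:ℝ)/x := by
          push_cast
          rw [le_div_iff₀ hxpos]; nlinarith
        have := Int.le_floor.mpr h
        exact_mod_cast this
      rw [hq]
      have : (cn:ℝ) / (a:ℝ) ≤ x + x/2 := by
        rw [div_le_iff₀ hapos]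
        nlinarith
      linarith

lemma gasA_bounds (c : ℕ → ℕ) (hc : ∀ n, 1 ≤ n → 0 < c n) (α : ℝ) :
    ∀ n : ℕ, 0 ≤ gasA c α (n+1) ∧ gasA c α (n+1) ≤ (1/2)^n ∧ gasA c α (n+1) < 1 := by
  intro n
  induction n with
  | zero =>
    have h0 : 0 ≤ α - ⌊α⌋ := by
      have := Int.floor_le α; linarith
    have h1 : α - ⌊α⌋ < 1 := by
      have := Int.lt_floor_add_one α; linarith
    have hA1 : gasA c α 1 = α - ⌊α⌋ := rfl
    rw [hA1]
    exact ⟨h0, by simpa using h1.le, h1⟩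
  | succ n ih =>
    obtain ⟨ih0, ih1, ih2⟩ := ih
    obtain ⟨k0, k1, k2⟩ := gas_key (c (n+1)) (hc (n+1) (Nat.le_add_left 1 n)) _ ih0 ih2
    have hA : gasA c α (n+2) = gasQaux (c (n+1)) (gasA c α (n+1)) - gasA c α (n+1) := rfl
    refine ⟨by rw [hA]; exact k0, ?_, ?_⟩
    · rw [hA]
      cases n with
      | zero => simpa using k1
      | succ m =>
        have hle : gasA c α (m+2) ≤ 1/2 := by
          calc gasA c α (m+2) ≤ (1/2)^(m+1) := ih1
            _ ≤ (1/2)^1 := by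
              apply pow_le_pow_of_le_one (by norm_num) (by norm_num)
              omega
            _ = 1/2 := by norm_num
        have := k2 hle
        calc gasQaux (c (m+2)) (gasA c α (m+2)) - gasA c α (m+2) ≤ gasA c α (m+2)/2 := this
          _ ≤ (1/2)^(m+1)/2 := by linarith
          _ = (1/2)^(m+2) := by ring
    · rw [hA]; linarith

/-- The series $\sum_{n=1}^\infty (-1)^{n-1} q_n$ converges and
$\alpha = q_0 + \sum_{n=1}^\infty (-1)^{n-1} q_n$. -/
theorem gas_expansion_converges_to (c : ℕ → ℕ) (hc : ∀ n, 1 ≤ n → 0 < c n) (α : ℝ) :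
    Tendsto (fun N : ℕ => gasQ c α 0 + ∑ k ∈ Finset.range N, (-1 : ℝ) ^ k * gasQ c α (k + 1))
      atTop (𝓝 α) := by
  have hsum : ∀ N : ℕ, gasQ c α 0 + ∑ k ∈ Finset.range N, (-1 : ℝ) ^ k * gasQ c α (k + 1)
      = α - (-1)^N * gasA c α (N+1) := by
    intro N
    have htel : ∑ k ∈ Finset.range N, (-1 : ℝ) ^ k * gasQ c α (k + 1)
        = (-1:ℝ)^0 * gasA c α 1 - (-1:ℝ)^N * gasA c α (N+1) := by
      rw [← Finset.sum_range_sub' (fun k => (-1:ℝ)^k * gasA c α (k+1)) N]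
      apply Finset.sum_congr rfl
      intro k _
      have hA : gasA c α (k+2) = gasQaux (c (k+1)) (gasA c α (k+1)) - gasA c α (k+1) := rfl
      have hQ : gasQ c α (k+1) = gasQaux (c (k+1)) (gasA c α (k+1)) := rfl
      rw [hQ]
      have : gasQaux (c (k+1)) (gasA c α (k+1)) = gasA c α (k+1) + gasA c α (k+2) := by
        rw [hA]; ring
      rw [this, pow_succ]
      ring
    rw [htel]
    have h0 : gasQ c α 0 = (⌊α⌋ : ℝ) := by simp [gasQ]
    have h1 : gasA c α 1 = α - ⌊α⌋ := rfl
    rw [h0, h1]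
    ring
  simp only [hsum]
  have hto : Tendsto (fun N : ℕ => (-1:ℝ)^N * gasA c α (N+1)) atTop (𝓝 0) := by
    refine squeeze_zero_norm (fun N => ?_)
      (tendsto_pow_atTop_nhds_zero_of_lt_one (by norm_num : (0:ℝ) ≤ 1/2) (by norm_num))
    · obtain ⟨h0, h1, _⟩ := gasA_bounds c hc α N
      rw [norm_mul, norm_pow, norm_neg, norm_one, one_pow, one_mul,
        Real.norm_of_nonneg h0]
      exact h1
  have := Tendsto.const_sub α hto
  simpa using this
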